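/- For every simple graph G on n vertices, μ₁(G)² + μₙ(G)² + μ₁(Ḡ)² + μₙ(Ḡ)² < n², where μ₁ and μₙ denote the largest and smallest adjacency eigenvalues respectively. -/

import Mathlib

open Matrix SimpleGraph

/-- The eigenvalues of the adjacency matrix of `G`, in descending order:
`graphEig G i` is the `(i+1)`-th largest eigenvalue. -/
noncomputable def graphEig {n : ℕ} (G : SimpleGraph (Fin n)) (i : Fin n) : ℝ :=
  letI := Classical.decRel G.Adj
  letI hH : (G.adjMatrix ℝ).IsHermitian := by rw [Matrix.IsHermitian, conjTranspose_eq_transpose_of_trivial]; exact G.isSymm_adjMatrix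
  hH.eigenvalues (Tuple.sort hH.eigenvalues i.rev)

lemma trace_sq_eq {m : Type*} [Fintype m] [DecidableEq m] (A : Matrix m m ℝ)
    (hA : A.IsHermitian) : (A * A).trace = ∑ i, hA.eigenvalues i ^ 2 := by
  set U : Matrix m m ℝ := (hA.eigenvectorUnitary : Matrix m m ℝ) with hU
  set D : Matrix m m ℝ := diagonal (RCLike.ofReal ∘ hA.eigenvalues) with hD
  have hs : A = U * D * star U := hA.spectral_theorem
  have hUU : star U * U = 1 := (Matrix.mem_unitaryGroup_iff').mp hA.eigenvectorUnitary.2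
  calc (A * A).trace = (U * D * ((star U * U) * D) * star U).trace := by
        rw [hs]; noncomm_ring
    _ = (D * D).trace := by
        rw [hUU, Matrix.one_mul, Matrix.trace_mul_cycle, ← Matrix.mul_assoc, hUU, Matrix.one_mul]
    _ = ∑ i, hA.eigenvalues i ^ 2 := by
        simp [hD, diagonal_mul_diagonal, Matrix.trace, Matrix.diag, sq]

lemma two_sq_le {m : Type*} [Fintype m] [DecidableEq m] (A : Matrix m m ℝ)
    (hA : A.IsHermitian) (a b : m) (hab : a ≠ b) :
    hA.eigenvalues a ^ 2 + hA.eigenvalues b ^ 2 ≤ (A * A).trace := by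
  rw [trace_sq_eq A hA]
  calc hA.eigenvalues a ^ 2 + hA.eigenvalues b ^ 2
      = ∑ i ∈ ({a, b} : Finset m), hA.eigenvalues i ^ 2 := (Finset.sum_pair (f := fun i => hA.eigenvalues i ^ 2) hab).symm
    _ ≤ _ := Finset.sum_le_sum_of_subset_of_nonneg (Finset.subset_univ _)
        (fun i _ _ => sq_nonneg _)

lemma graphEig_two_sq_le {n : ℕ} (hn : 2 ≤ n) (G : SimpleGraph (Fin n)) :
    letI := Classical.decRel G.Adj
    graphEig G ⟨0, lt_of_lt_of_le two_pos hn⟩ ^ 2 + graphEig G ⟨n - 1, Nat.sub_lt (lt_of_lt_of_le two_pos hn) one_pos⟩ ^ 2 ≤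
      (G.adjMatrix ℝ * G.adjMatrix ℝ).trace := by
  letI := Classical.decRel G.Adj
  have hH : (G.adjMatrix ℝ).IsHermitian := by
    rw [Matrix.IsHermitian, conjTranspose_eq_transpose_of_trivial]; exact G.isSymm_adjMatrix
  show hH.eigenvalues (Tuple.sort hH.eigenvalues (Fin.rev _)) ^ 2 +
      hH.eigenvalues (Tuple.sort hH.eigenvalues (Fin.rev _)) ^ 2 ≤ _
  apply two_sq_le
  intro h
  have := (Tuple.sort hH.eigenvalues).injective h
  have := Fin.rev_injective this
  have : (0 : ℕ) = n - 1 := congrArg Fin.val this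
  omega

lemma trace_sum_eq {n : ℕ} (G : SimpleGraph (Fin n)) :
    letI := Classical.decRel G.Adj
    letI := Classical.decRel Gᶜ.Adj
    (G.adjMatrix ℝ * G.adjMatrix ℝ).trace + (Gᶜ.adjMatrix ℝ * Gᶜ.adjMatrix ℝ).trace
      = n ^ 2 - n := by
  letI := Classical.decRel G.Adj
  letI := Classical.decRel Gᶜ.Adj
  have hterm : ∀ i j : Fin n,
      (G.adjMatrix ℝ) i j * (G.adjMatrix ℝ) j i + (Gᶜ.adjMatrix ℝ) i j * (Gᶜ.adjMatrix ℝ) j i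
        = if i = j then 0 else 1 := by
    intro i j
    by_cases h : i = j
    · simp [h]
    · by_cases hadj : G.Adj i j
      · simp [hadj, hadj.symm, h, compl_adj]
      · have : Gᶜ.Adj i j := ⟨h, hadj⟩
        simp [hadj, fun hh : G.Adj j i => hadj hh.symm, h, this, this.symm]
  have : (G.adjMatrix ℝ * G.adjMatrix ℝ).trace + (Gᶜ.adjMatrix ℝ * Gᶜ.adjMatrix ℝ).trace
      = ∑ i : Fin n, ∑ j : Fin n, (if i = j then (0:ℝ) else 1) := by
    simp only [Matrix.trace, Matrix.diag, Matrix.mul_apply, ← Finset.sum_add_distrib]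
    exact Finset.sum_congr rfl fun i _ => Finset.sum_congr rfl fun j _ => hterm i j
  rw [this]
  have : ∀ i : Fin n, ∑ j : Fin n, (if i = j then (0:ℝ) else 1) = n - 1 := by
    intro i
    have h1 : ∀ j : Fin n, (if i = j then (0:ℝ) else 1) = 1 - (if i = j then 1 else 0) := by
      intro j; split <;> norm_num
    simp only [h1, Finset.sum_sub_distrib, Finset.sum_const, Finset.card_univ,
      Fintype.card_fin, Finset.sum_ite_eq, Finset.mem_univ, if_true, nsmul_eq_mul, mul_one]
  rw [Finset.sum_congr rfl fun i _ => this i]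
  simp [Finset.sum_const]
  ring

theorem stmt4 (n : ℕ) (hn : 2 ≤ n) (G : SimpleGraph (Fin n)) :
    graphEig G ⟨0, by omega⟩ ^ 2 + graphEig G ⟨n - 1, by omega⟩ ^ 2 +
      graphEig Gᶜ ⟨0, by omega⟩ ^ 2 + graphEig Gᶜ ⟨n - 1, by omega⟩ ^ 2 < (n : ℝ) ^ 2 := by
  letI := Classical.decRel G.Adj
  letI := Classical.decRel Gᶜ.Adj
  have h1 := graphEig_two_sq_le hn G
  have h2 := graphEig_two_sq_le hn Gᶜ
  have h3 := trace_sum_eq G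
  have hn' : (0:ℝ) < n := by positivity
  nlinarith [h1, h2, h3]
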